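/- Let k be a field, V a finite-dimensional k-vector space, B a symmetric bilinear form on V, and e ∈ V with B(e, e) ≠ 0. Set V_H := {v ∈ V : B(e, v) = 0}, so that V = k·e ⊕ V_H; let E : V → V be the projection onto V_H along e, and for x ∈ End(V) let x_H ∈ End(V_H) be the restriction of E∘x to V_H. Then for every x ∈ End(V) and every t ∈ k such that 1_V − t x is invertible, one has B(e, (1_V − t x)^{−1} e) / B(e, e) = det(1_{V_H} − t x_H) / det(1_V − t x). -/

import Mathlib

/-- The projection of `V` onto `V_H = (k·e)^⊥` along `e`. -/
noncomputable def projH {k V : Type*} [Field k] [AddCommGroup V] [Module k V]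
    (B : LinearMap.BilinForm k V) (e : V) : V →ₗ[k] V :=
  LinearMap.id - (B e e)⁻¹ • (LinearMap.toSpanSingleton k V e ∘ₗ B e)

theorem projH_mem {k V : Type*} [Field k] [AddCommGroup V] [Module k V]
    (B : LinearMap.BilinForm k V) (e : V) (he : B e e ≠ 0) (w : V) :
    projH B e w ∈ LinearMap.ker (B e) := by
  simp only [projH, LinearMap.mem_ker, LinearMap.sub_apply, LinearMap.id_apply,
    LinearMap.smul_apply, LinearMap.comp_apply, LinearMap.toSpanSingleton_apply,
    map_sub, map_smul, smul_eq_mul]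
  rw [mul_comm (B e w) (B e e), inv_mul_cancel_left₀ he, sub_self]

/-- The compression `x_H = (E ∘ x)|_{V_H}` of `x` to `V_H = (k·e)^⊥`. -/
noncomputable def xH {k V : Type*} [Field k] [AddCommGroup V] [Module k V]
    (B : LinearMap.BilinForm k V) (e : V) (he : B e e ≠ 0) (x : Module.End k V) :
    Module.End k (LinearMap.ker (B e)) :=
  LinearMap.restrict (projH B e ∘ₗ (x : V →ₗ[k] V))
    (p := LinearMap.ker (B e)) (q := LinearMap.ker (B e))
    (fun w _ => projH_mem B e he (x w))

lemma projH_apply {k V : Type*} [Field k] [AddCommGroup V] [Module k V]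
    (B : LinearMap.BilinForm k V) (e : V) (v : V) :
    projH B e v = v - ((B e e)⁻¹ * B e v) • e := by
  simp [projH, mul_smul]

/-- Cramer's-rule identity: for `1 - t•x` invertible,
`B(e, (1 - t•x)⁻¹ e) / B(e,e) = det(1_{V_H} - t•x_H) / det(1_V - t•x)`. -/
theorem statement11 (k V : Type*) [Field k] [AddCommGroup V] [Module k V]
    [FiniteDimensional k V]
    (B : LinearMap.BilinForm k V)
    (hsymm : ∀ u v : V, B u v = B v u)
    (e : V) (he : B e e ≠ 0)
    (x : Module.End k V) (t : k) (hinv : IsUnit (1 - t • x)) :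
    B e (Ring.inverse (1 - t • x) e) / B e e =
      LinearMap.det ((1 : Module.End k (LinearMap.ker (B e))) - t • xH B e he x) /
        LinearMap.det ((1 : Module.End k V) - t • x) := by
  classical
  set K := LinearMap.ker (B e) with hKdef
  have hker : ∀ w : K, B e (w : V) = 0 := fun w => w.2
  set n := Module.finrank k K with hn
  let bK : Module.Basis (Fin n) k K := Module.finBasis k K
  have hli : ∀ (c : k), ∀ w ∈ K, c • e + w = 0 → c = 0 := by
    intro c w hw h
    have h0 : B e (c • e + w) = 0 := by rw [h]; simp
    rw [map_add, map_smul, smul_eq_mul] at h0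
    have hw0 : B e w = 0 := hw
    rw [hw0, add_zero] at h0
    exact (mul_eq_zero.mp h0).resolve_right he
  have hsp : ∀ v : V, ∃ c : k, v + c • e ∈ K := by
    intro v
    refine ⟨-((B e e)⁻¹ * B e v), ?_⟩
    have := projH_mem B e he v
    rwa [projH_apply, sub_eq_add_neg, ← neg_smul] at this
  let b : Module.Basis (Fin (n + 1)) k V := Module.Basis.mkFinCons e bK hli hsp
  have hb : (b : Fin (n+1) → V) = Fin.cons e ((↑) ∘ bK) := Module.Basis.coe_mkFinCons e bK hli hsp
  have hb0 : b 0 = e := by rw [hb]; rfl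
  have hbs : ∀ i : Fin n, b i.succ = (bK i : V) := by intro i; rw [hb]; simp
  set y : Module.End k V := (1 : Module.End k V) - t • x with hy
  set yH : Module.End k K := (1 : Module.End k K) - t • xH B e he x with hyHdef
  set M : Matrix (Fin (n+1)) (Fin (n+1)) k := LinearMap.toMatrix b b y with hM
  -- determinant facts
  have hdety : LinearMap.det y = M.det := (LinearMap.det_toMatrix b y).symm
  have hMunit : IsUnit M := by
    have := hinv.map (LinearMap.toMatrixAlgEquiv b)
    rwa [show (LinearMap.toMatrixAlgEquiv b) y = M from rfl] at this
  have hdetne : M.det ≠ 0 := by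
    intro h
    exact (by simp [h] : ¬ IsUnit M.det) (Matrix.isUnit_iff_isUnit_det M |>.mp hMunit)
  -- matrix of the inverse
  have hinvM : LinearMap.toMatrix b b (Ring.inverse y) = M⁻¹ := by
    refine (Matrix.inv_eq_right_inv ?_).symm
    rw [hM, ← LinearMap.toMatrix_mul, Ring.mul_inverse_cancel y hinv, LinearMap.toMatrix_one]
  -- the (0,0) coefficient
  have hc : b.repr (Ring.inverse y e) 0 = M⁻¹ 0 0 := by
    rw [← hinvM, LinearMap.toMatrix_apply, hb0]
  -- B e v in terms of the basis
  have hBv : ∀ v : V, B e v = b.repr v 0 * B e e := by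
    intro v
    conv_lhs => rw [← b.sum_repr v]
    rw [map_sum, Fin.sum_univ_succ, hb0]
    simp only [map_smul, smul_eq_mul]
    rw [Finset.sum_eq_zero, add_zero]
    intro i _
    rw [hbs, hker (bK i), mul_zero]
  -- repr of elements of K in the big basis
  have hreprK : ∀ (w : K) (i : Fin n), b.repr (w : V) i.succ = bK.repr w i := by
    intro w i
    have hw : (w : V) = ∑ j, bK.repr w j • b j.succ := by
      conv_lhs => rw [← bK.sum_repr w]
      push_cast
      simp [hbs]
    rw [hw, map_sum]
    simp only [map_smul, Module.Basis.repr_self, Finsupp.coe_finset_sum, Finset.sum_apply,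
      Finsupp.smul_apply, Finsupp.single_apply, Fin.succ_inj, smul_eq_mul]
    simp [Finset.sum_ite_eq' Finset.univ i]
  have hprojrepr : ∀ (v : V) (i : Fin n), b.repr (projH B e v) i.succ = b.repr v i.succ := by
    intro v i
    rw [projH_apply, map_sub, map_smul, ← hb0, Module.Basis.repr_self]
    simp [Finsupp.single_apply, (Fin.succ_ne_zero i).symm]
  -- yH acts as projH ∘ y
  have hyH : ∀ w : K, ((yH w : K) : V) = projH B e (y (w : V)) := by
    intro w
    have h1 : ((xH B e he x w : K) : V) = projH B e (x (w : V)) := rfl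
    have h2 : projH B e (w : V) = (w : V) := by
      rw [projH_apply, hker w, mul_zero, zero_smul, sub_zero]
    rw [hyHdef, hy]
    simp only [LinearMap.sub_apply, Module.End.one_apply, LinearMap.smul_apply,
      Submodule.coe_sub, SetLike.val_smul, h1, map_sub, map_smul, h2]
  -- the matrix of yH is the submatrix of M
  have hMK : LinearMap.toMatrix bK bK yH = M.submatrix Fin.succ Fin.succ := by
    ext i j
    rw [Matrix.submatrix_apply, LinearMap.toMatrix_apply, hM, LinearMap.toMatrix_apply,
      ← hreprK, hyH, hprojrepr, hbs]
  have hdetyH : LinearMap.det yH = (M.submatrix Fin.succ Fin.succ).det := by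
    rw [← LinearMap.det_toMatrix bK yH, hMK]
  -- adjugate identity
  have hadj : M.adjugate 0 0 = (M.submatrix Fin.succ Fin.succ).det := by
    rw [Matrix.adjugate_fin_succ_eq_det_submatrix]
    simp [Fin.succAbove_zero]
  have hM00 : M⁻¹ 0 0 = (M.submatrix Fin.succ Fin.succ).det / M.det := by
    rw [Matrix.inv_def, Matrix.smul_apply, hadj, Ring.inverse_eq_inv, smul_eq_mul,
      div_eq_inv_mul]
  -- put everything together
  rw [hBv, mul_div_assoc, div_self he, mul_one, hc, hM00, hdety, hdetyH]
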